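/- For real C₀ ≥ 1 and sufficiently large C (e.g., C ≥ 4C₀ + 4C₀²), if nonnegative reals satisfy I_{1,m} ≤ C^m·m! for m ≤ k+1 and I_{0,j} ≤ C₀ for j ≤ 4, I_{0,j} ≤ C^{j-4}(j-5)! for j ≥ 5, then 4·∑_{i=0}^{k} C(k,i)·I_{1,i+1}·C₀·I_{0,k-i+4} ≤ C^{k+2}·(k+2)!. -/

import Mathlib

theorem stmt_14 (C₀ C : ℝ) (hC₀ : 1 ≤ C₀) (hC : 4 * C₀ + 4 * C₀ ^ 2 ≤ C)
    (k : ℕ) (I1 I0 : ℕ → ℝ)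
    (hI1nonneg : ∀ m, 0 ≤ I1 m) (hI0nonneg : ∀ j, 0 ≤ I0 j)
    (hI1 : ∀ m, m ≤ k + 1 → I1 m ≤ C ^ m * (m.factorial : ℝ))
    (hI0a : ∀ j, j ≤ 4 → I0 j ≤ C₀)
    (hI0b : ∀ j, 5 ≤ j → I0 j ≤ C ^ (j - 4) * ((j - 5).factorial : ℝ)) :
    4 * ∑ i ∈ Finset.range (k + 1),
        (k.choose i : ℝ) * I1 (i + 1) * C₀ * I0 (k - i + 4)
      ≤ C ^ (k + 2) * ((k + 2).factorial : ℝ) := by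
  have hC1 : (1:ℝ) ≤ C := by nlinarith
  have hC0 : (0:ℝ) ≤ C := by linarith
  have hC₀0 : (0:ℝ) ≤ C₀ := by linarith
  set B : ℝ := C₀ ^ 2 * (C ^ (k + 1) * ((k + 1).factorial : ℝ)) with hB
  have key : ∀ i ∈ Finset.range (k + 1),
      (k.choose i : ℝ) * I1 (i + 1) * C₀ * I0 (k - i + 4) ≤ B := by
    intro i hi
    rw [Finset.mem_range] at hi
    have hik : i ≤ k := Nat.lt_succ_iff.mp hi
    have hI1b : I1 (i + 1) ≤ C ^ (i + 1) * ((i + 1).factorial : ℝ) := hI1 _ (by omega)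
    have hcpos : (0:ℝ) ≤ (k.choose i : ℝ) := Nat.cast_nonneg _
    have hpow : C ^ (i + 1) * C ^ (k - i) = C ^ (k + 1) := by
      rw [← pow_add]; congr 1; omega
    by_cases h : i = k
    · subst h
      have h4 : i - i + 4 = 4 := by omega
      rw [h4]
      have hI04 : I0 4 ≤ C₀ := hI0a 4 le_rfl
      calc (i.choose i : ℝ) * I1 (i + 1) * C₀ * I0 4
          ≤ (i.choose i : ℝ) * (C ^ (i + 1) * ((i + 1).factorial : ℝ)) * C₀ * C₀ := by
            gcongr <;> first | exact hI1nonneg _ | exact hI0nonneg _ | positivity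
        _ = C₀ ^ 2 * (C ^ (i + 1) * ((i + 1).factorial : ℝ)) := by
            rw [Nat.choose_self]; push_cast; ring
    · have hlt : i < k := lt_of_le_of_ne hik h
      have h5 : 5 ≤ k - i + 4 := by omega
      have hI0b' : I0 (k - i + 4) ≤ C ^ (k - i) * ((k - i - 1).factorial : ℝ) := by
        have := hI0b (k - i + 4) h5
        rwa [show k - i + 4 - 4 = k - i by omega, show k - i + 4 - 5 = k - i - 1 by omega] at this
      have hcomb : (k.choose i) * ((i + 1).factorial) * ((k - i - 1).factorial)
          ≤ (k + 1).factorial := by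
        have h1 : (k.choose i) * ((i + 1).factorial) * ((k - i - 1).factorial) * (k - i)
            = (i + 1) * k.factorial := by
          have h2 : (k - i - 1).factorial * (k - i) = (k - i).factorial := by
            obtain ⟨n, hn⟩ : ∃ n, k - i = n + 1 := ⟨k - i - 1, by omega⟩
            have hn1 : k - i - 1 = n := by omega
            rw [hn1, hn, Nat.factorial_succ]; ring
          calc (k.choose i) * ((i + 1).factorial) * ((k - i - 1).factorial) * (k - i)
              = (i + 1) * ((k.choose i) * i.factorial * (k - i).factorial) := by
                rw [Nat.factorial_succ]
                rw [mul_assoc ((k.choose i) * ((i+1) * i.factorial))]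
                rw [h2]; ring
            _ = (i + 1) * k.factorial := by rw [Nat.choose_mul_factorial_mul_factorial hik]
        have h3 : (k.choose i) * ((i + 1).factorial) * ((k - i - 1).factorial)
            ≤ (i + 1) * k.factorial := by
          calc (k.choose i) * ((i + 1).factorial) * ((k - i - 1).factorial)
              ≤ (k.choose i) * ((i + 1).factorial) * ((k - i - 1).factorial) * (k - i) :=
                Nat.le_mul_of_pos_right _ (by omega)
            _ = (i + 1) * k.factorial := h1
        calc (k.choose i) * ((i + 1).factorial) * ((k - i - 1).factorial)
            ≤ (i + 1) * k.factorial := h3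
          _ ≤ (k + 1) * k.factorial := Nat.mul_le_mul_right _ (by omega)
          _ = (k + 1).factorial := (Nat.factorial_succ k).symm
      have hcombR : ((k.choose i : ℝ)) * ((i + 1).factorial : ℝ) * ((k - i - 1).factorial : ℝ)
          ≤ ((k + 1).factorial : ℝ) := by exact_mod_cast hcomb
      calc (k.choose i : ℝ) * I1 (i + 1) * C₀ * I0 (k - i + 4)
          ≤ (k.choose i : ℝ) * (C ^ (i + 1) * ((i + 1).factorial : ℝ)) * C₀ *
              (C ^ (k - i) * ((k - i - 1).factorial : ℝ)) := by
            gcongr <;> first | exact hI1nonneg _ | exact hI0nonneg _ | positivity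
        _ = C₀ * (C ^ (i + 1) * C ^ (k - i)) *
              ((k.choose i : ℝ) * ((i + 1).factorial : ℝ) * ((k - i - 1).factorial : ℝ)) := by
            ring
        _ ≤ C₀ * (C ^ (i + 1) * C ^ (k - i)) * ((k + 1).factorial : ℝ) := by
            gcongr
        _ = C₀ * (C ^ (k + 1) * ((k + 1).factorial : ℝ)) := by rw [hpow]; ring
        _ ≤ B := by
            rw [hB]
            have hX : (0:ℝ) ≤ C ^ (k + 1) * ((k + 1).factorial : ℝ) := by positivity
            have hcc : C₀ ≤ C₀ ^ 2 := by nlinarith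
            exact mul_le_mul_of_nonneg_right hcc hX
  have hsum : ∑ i ∈ Finset.range (k + 1),
      (k.choose i : ℝ) * I1 (i + 1) * C₀ * I0 (k - i + 4) ≤ (k + 1) * B := by
    calc ∑ i ∈ Finset.range (k + 1),
        (k.choose i : ℝ) * I1 (i + 1) * C₀ * I0 (k - i + 4)
        ≤ ∑ _i ∈ Finset.range (k + 1), B := Finset.sum_le_sum key
      _ = (k + 1) * B := by rw [Finset.sum_const, Finset.card_range]; push_cast; ring
  have hfinal : 4 * ((k + 1 : ℝ) * B) ≤ C ^ (k + 2) * ((k + 2).factorial : ℝ) := by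
    rw [hB]
    have h1 : C ^ (k + 2) * ((k + 2).factorial : ℝ)
        = (C * (k + 2)) * (C ^ (k + 1) * ((k + 1).factorial : ℝ)) := by
      rw [pow_succ, Nat.factorial_succ]; push_cast; ring
    rw [h1]
    have h2 : (0:ℝ) ≤ C ^ (k + 1) * ((k + 1).factorial : ℝ) := by positivity
    have h3 : 4 * ((k + 1 : ℝ)) * C₀ ^ 2 ≤ C * (k + 2) := by nlinarith [sq_nonneg C₀]
    nlinarith
  linarith [mul_le_mul_of_nonneg_left hsum (by norm_num : (0:ℝ) ≤ 4)]
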